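/- Let φ be a Schwartz function on ℝ with φ ≥ 0, ∫ φ(y) dy = 1, and Fourier transform φ̂ compactly supported with φ̂(p) = 0 whenever |p| ≥ ρ_φ for some ρ_φ > 0. For L ∈ ℕ and R > 0 define the lattice averaging kernel ϕ(ξ) := R^{−1} Σ_{n∈ℤ} φ((ξ − Ln)/R), ξ ∈ ℝ. If R ≥ ρ_φ, then Σ_{x∈Λ_L} ϕ(ξ + x) = 1 for every ξ ∈ ℝ. -/

import Mathlib

open Real MeasureTheory

/-- The discrete circle of `L` sites, represented by integers:
`{−(L−1)/2, …, (L−1)/2}` for odd `L` and `{−L/2+1, …, L/2}` for even `L`. -/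
noncomputable def Lambda (L : ℕ) : Finset ℤ := Finset.Ioc ((L : ℤ) / 2 - L) ((L : ℤ) / 2)

/-- The lattice averaging kernel `ϕ(ξ) = R⁻¹ Σ_{n∈ℤ} φ((ξ − Ln)/R)`. -/
noncomputable def latticeKernel (φ : SchwartzMap ℝ ℝ) (L R : ℝ) (ξ : ℝ) : ℝ :=
  R⁻¹ * ∑' n : ℤ, φ ((ξ - L * n) / R)

/-- The Fourier transform `φ̂(p) = ∫ φ(y) e^{−2πipy} dy`. -/
noncomputable def fourierHat (φ : SchwartzMap ℝ ℝ) (p : ℝ) : ℂ :=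
  ∫ y : ℝ, (φ y : ℂ) * Complex.exp (-(2 * π * p * y) * Complex.I)

open SchwartzMap FourierTransform

/-- Postcomposition of a real Schwartz function with the embedding `ℝ → ℂ`. -/
noncomputable def toComplexS (f : SchwartzMap ℝ ℝ) : SchwartzMap ℝ ℂ :=
  SchwartzMap.bilinLeftCLM (ContinuousLinearMap.lsmul ℝ ℝ : ℝ →L[ℝ] ℂ →L[ℝ] ℂ)
    (Function.HasTemperateGrowth.const (1 : ℂ)) f

lemma toComplexS_apply (f : SchwartzMap ℝ ℝ) (x : ℝ) : toComplexS f x = (f x : ℂ) := by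
  show (f x) • (1:ℂ) = _
  simp [Complex.real_smul]

/-- Precomposition of a Schwartz function with division by a nonzero constant. -/
noncomputable def scaleS (f : SchwartzMap ℝ ℂ) (R : ℝ) (hR : R ≠ 0) : SchwartzMap ℝ ℂ :=
  SchwartzMap.compCLMOfContinuousLinearEquiv ℝ
    (ContinuousLinearEquiv.unitsEquivAut ℝ (Units.mk0 R⁻¹ (inv_ne_zero hR))) f

lemma scaleS_apply (f : SchwartzMap ℝ ℂ) (R : ℝ) (hR : R ≠ 0) (x : ℝ) :
    scaleS f R hR x = f (x / R) := by
  simp [scaleS, div_eq_mul_inv]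

lemma coeff_eq' (φ : SchwartzMap ℝ ℝ) (R : ℝ) (hR : R ≠ 0) (h0 : 0 < R) (w : ℝ) :
    𝓕 (⇑(scaleS (toComplexS φ) R hR)) w = R * fourierHat φ (w * R) := by
  have h1 : 𝓕 (⇑(scaleS (toComplexS φ) R hR)) w
      = ∫ v : ℝ, (fun u => (φ u : ℂ) * Complex.exp (-(2 * π * (w * R) * u) * Complex.I)) (v / R) := by
    rw [Real.fourier_real_eq_integral_exp_smul]
    congr 1
    ext v
    rw [scaleS_apply, toComplexS_apply]
    rw [smul_eq_mul, mul_comm]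
    congr 2
    have hRc : (R:ℂ) ≠ 0 := by exact_mod_cast hR
    push_cast
    field_simp
  rw [h1, MeasureTheory.Measure.integral_comp_div
    (fun u => (φ u : ℂ) * Complex.exp (-(2 * π * (w * R) * u) * Complex.I)) R,
    abs_of_pos h0, fourierHat]
  simp [Complex.real_smul]

/-- Poisson summation for the scaled kernel: the translates of `φ(·/R)` over `ℤ` sum to `R`. -/
lemma keySum (φ : SchwartzMap ℝ ℝ) (hnorm : ∫ y : ℝ, φ y = 1)
    (ρ : ℝ) (hρ : 0 < ρ)
    (hsupp : ∀ p : ℝ, ρ ≤ |p| → fourierHat φ p = 0)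
    (R : ℝ) (hR : ρ ≤ R) (ξ : ℝ) :
    HasSum (fun n : ℤ => φ ((ξ + n) / R)) R := by
  have h0 : 0 < R := hρ.trans_le hR
  have hne : R ≠ 0 := h0.ne'
  set g := scaleS (toComplexS φ) R hne with hg
  have hP := SchwartzMap.tsum_eq_tsum_fourier g ξ
  have h00 : fourierHat φ 0 = 1 := by
    unfold fourierHat
    simp only [Complex.ofReal_zero, mul_zero, zero_mul, mul_zero, neg_zero, Complex.exp_zero,
      mul_one]
    rw [show (1:ℂ) = ((1:ℝ):ℂ) from by norm_num, ← hnorm]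
    exact integral_ofReal
  have hRHS : ∑' n : ℤ, fourierTransformCLM ℝ g n * fourier n (ξ : UnitAddCircle) = (R : ℂ) := by
    rw [tsum_eq_single 0]
    · rw [SchwartzMap.fourierTransformCLM_apply, hg, SchwartzMap.fourier_coe, coeff_eq' φ R hne h0]
      push_cast
      rw [zero_mul, h00]
      simp
    · intro n hn
      rw [SchwartzMap.fourierTransformCLM_apply, hg, SchwartzMap.fourier_coe, coeff_eq' φ R hne h0, hsupp, mul_zero,
        zero_mul]
      rw [abs_mul, abs_of_pos h0]
      calc ρ ≤ R := hR
        _ = 1 * R := (one_mul R).symm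
        _ ≤ |(n:ℝ)| * R := by
            apply mul_le_mul_of_nonneg_right _ h0.le
            rw [← Int.cast_abs]
            exact_mod_cast Int.one_le_abs hn
  have hterm : ∀ n : ℤ, g (ξ + n) = ((φ ((ξ + n) / R) : ℝ) : ℂ) := fun n => by
    rw [hg, scaleS_apply, toComplexS_apply]
  have hC : ∑' n : ℤ, ((φ ((ξ + n) / R) : ℝ) : ℂ) = (R : ℂ) := by
    rw [← tsum_congr hterm, hP]; exact hRHS
  have hs : Summable (fun n : ℤ => φ ((ξ + n) / R)) := by
    by_contra hns
    have : ¬ Summable (fun n : ℤ => ((φ ((ξ + n) / R) : ℝ) : ℂ)) := fun h =>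
      hns (Complex.summable_ofReal.mp h)
    rw [tsum_eq_zero_of_not_summable this] at hC
    exact_mod_cast hne.symm (by exact_mod_cast hC)
  have hval : ∑' n : ℤ, φ ((ξ + n) / R) = R := by
    have := Complex.ofReal_tsum (L := SummationFilter.unconditional ℤ) (fun n : ℤ => φ ((ξ + n) / R))
    rw [hC] at this
    exact_mod_cast this
  exact (Summable.hasSum_iff hs).mpr hval

/-- Reindexing: `ℤ` is in bijection with `Λ_L × ℤ` via `(x, n) ↦ x − L n`. -/
def lamEquiv (L : ℕ) (hL : 0 < L) : ({x // x ∈ Lambda L} × ℤ) ≃ ℤ where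
  toFun p := p.1.1 - L * p.2
  invFun m := ⟨⟨(L : ℤ) / 2 - ((L : ℤ) / 2 - m) % L, by
    have h1 := Int.emod_nonneg ((L : ℤ) / 2 - m) (by exact_mod_cast hL.ne' : (L:ℤ) ≠ 0)
    have h2 := Int.emod_lt_of_pos ((L : ℤ) / 2 - m) (by exact_mod_cast hL : (0:ℤ) < L)
    simp only [Lambda, Finset.mem_Ioc]
    omega⟩, ((L : ℤ) / 2 - m) / L⟩
  left_inv := by
    rintro ⟨⟨x, hx⟩, n⟩
    have hL' : (0:ℤ) < L := by exact_mod_cast hL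
    simp only [Lambda, Finset.mem_Ioc] at hx
    have key : (L : ℤ) / 2 - (x - L * n) = ((L : ℤ) / 2 - x) + L * n := by ring
    have hmod : (((L : ℤ) / 2 - x) + L * n) % L = ((L : ℤ) / 2 - x) % L :=
      Int.add_mul_emod_self_left ..
    have hsmall : ((L : ℤ) / 2 - x) % L = (L : ℤ) / 2 - x :=
      Int.emod_eq_of_lt (by omega) (by omega)
    have hdiv : (((L : ℤ) / 2 - x) + L * n) / L = n := by
      rw [Int.add_mul_ediv_left _ _ hL'.ne', Int.ediv_eq_zero_of_lt (by omega) (by omega),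
        zero_add]
    ext
    · simp only [key, hmod, hsmall]; omega
    · simp only [key, hdiv]
  right_inv := by
    intro m
    have := Int.mul_ediv_add_emod ((L : ℤ) / 2 - m) (L : ℤ)
    simp only []
    omega

/-- If `R ≥ ρ_φ` then the lattice averaging kernel satisfies the lattice
normalization `Σ_{x∈Λ_L} ϕ(ξ + x) = 1` for every `ξ ∈ ℝ`. -/
theorem latticeKernel_lattice_normalization (φ : SchwartzMap ℝ ℝ)
    (hpos : ∀ y : ℝ, 0 ≤ φ y)
    (hnorm : ∫ y : ℝ, φ y = 1)
    (ρ : ℝ) (hρ : 0 < ρ)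
    (hsupp : ∀ p : ℝ, ρ ≤ |p| → fourierHat φ p = 0)
    (L : ℕ) (hL : 0 < L) (R : ℝ) (hR : ρ ≤ R) :
    ∀ ξ : ℝ, ∑ x ∈ Lambda L, latticeKernel φ L R (ξ + x) = 1 := by
  intro ξ
  have h0 : 0 < R := hρ.trans_le hR
  have hne : R ≠ 0 := h0.ne'
  have hk := keySum φ hnorm ρ hρ hsupp R hR ξ
  set f : ℤ → ℝ := fun m => φ ((ξ + m) / R) with hf
  have hsum : Summable f := hk.summable
  set e := lamEquiv L hL with he
  have hsum2 : Summable (f ∘ e) := (Equiv.summable_iff e).mpr hsum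
  have hmain : ∑ x ∈ Lambda L, ∑' n : ℤ, f (x - L * n) = R := by
    calc ∑ x ∈ Lambda L, ∑' n : ℤ, f (x - L * n)
        = ∑' x : {x // x ∈ Lambda L}, ∑' n : ℤ, f (x.1 - L * n) :=
          (Finset.tsum_subtype (Lambda L) (fun x => ∑' n : ℤ, f (x - L * n))).symm
      _ = ∑' p : {x // x ∈ Lambda L} × ℤ, (f ∘ e) p :=
          (Summable.tsum_prod' hsum2 fun b => hsum2.prod_factor b).symm
      _ = ∑' m : ℤ, f m := e.tsum_eq f
      _ = R := hk.tsum_eq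
  calc ∑ x ∈ Lambda L, latticeKernel φ L R (ξ + x)
      = ∑ x ∈ Lambda L, R⁻¹ * ∑' n : ℤ, f (x - L * n) := by
        refine Finset.sum_congr rfl fun x hx => ?_
        unfold latticeKernel
        congr 1
        refine tsum_congr fun n => ?_
        simp only [hf]
        congr 1
        push_cast
        ring
    _ = R⁻¹ * ∑ x ∈ Lambda L, ∑' n : ℤ, f (x - L * n) := (Finset.mul_sum ..).symm
    _ = R⁻¹ * R := by rw [hmain]
    _ = 1 := inv_mul_cancel₀ hne
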